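/- Under the ring-of-routers placement condition, every pair of active routers is connected by a path in the grid that uses only active routers; in particular every active router and every boundary (pin) vertex of the grid is reachable from every component's access router. -/

import Mathlib

/-- An axis-aligned rectangle `[a,b] × [c,d]` of grid cells. -/
structure Rect where
  a : ℤ
  b : ℤ
  c : ℤ
  d : ℤ
  hab : a ≤ b
  hcd : c ≤ d

/-- The set of cells covered by a rectangle. -/
def Rect.Mem (R : Rect) (p : ℤ × ℤ) : Prop :=
  R.a ≤ p.1 ∧ p.1 ≤ R.b ∧ R.c ≤ p.2 ∧ p.2 ≤ R.d

/-- The one-cell-enlarged rectangle `[a-1,b+1] × [c-1,d+1]`. -/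
def Rect.EnlMem (R : Rect) (p : ℤ × ℤ) : Prop :=
  R.a - 1 ≤ p.1 ∧ p.1 ≤ R.b + 1 ∧ R.c - 1 ≤ p.2 ∧ p.2 ≤ R.d + 1

/-- The component's access router: the router immediately above-right of its
rectangle. -/
def Rect.access (R : Rect) : ℤ × ℤ := (R.b + 1, R.d + 1)

/-- The n×m grid of routers. -/
def Grid (n m : ℕ) : Set (ℤ × ℤ) :=
  {p | 0 ≤ p.1 ∧ p.1 < (n : ℤ) ∧ 0 ≤ p.2 ∧ p.2 < (m : ℤ)}

/-- The boundary (pin) vertices of the n×m grid. -/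
def GridBoundary (n m : ℕ) : Set (ℤ × ℤ) :=
  {p | p ∈ Grid n m ∧ (p.1 = 0 ∨ p.1 = (n : ℤ) - 1 ∨ p.2 = 0 ∨ p.2 = (m : ℤ) - 1)}

/-- Grid adjacency. -/
def adj (u v : ℤ × ℤ) : Prop := (u.1 - v.1).natAbs + (u.2 - v.2).natAbs = 1

/-- Reachability within a set `S` of active routers. -/
def ReachOn (S : Set (ℤ × ℤ)) (u v : ℤ × ℤ) : Prop :=
  Relation.ReflTransGen (fun x y => adj x y ∧ x ∈ S ∧ y ∈ S) u v

/-- Under the ring-of-routers placement condition every pair of active routers is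
connected by a path through active routers; in particular every boundary (pin)
vertex is active and reachable from every component's access router. -/
lemma ReachOn.symm {S : Set (ℤ × ℤ)} {u v : ℤ × ℤ} (h : ReachOn S u v) :
    ReachOn S v u := by
  refine (@Relation.ReflTransGen.stdSymm _ _ ⟨?_⟩).symm _ _ h
  intro x y hxy
  exact ⟨by unfold adj at *; omega, hxy.2.2, hxy.2.1⟩

lemma reach_horiz_aux (S : Set (ℤ × ℤ)) (y : ℤ) : ∀ k : ℕ, ∀ x₁ : ℤ,
    (∀ x, x₁ ≤ x → x ≤ x₁ + k → (x, y) ∈ S) →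
    ReachOn S (x₁, y) (x₁ + k, y) := by
  intro k
  induction k with
  | zero => intro x₁ _; simpa [ReachOn] using Relation.ReflTransGen.refl
  | succ k ih =>
    intro x₁ h
    have h1 : ReachOn S (x₁ + 1, y) ((x₁ + 1) + k, y) :=
      ih (x₁ + 1) (fun x hx hx' => h x (by omega) (by push_cast; omega))
    have step : ReachOn S (x₁, y) (x₁ + 1, y) :=
      Relation.ReflTransGen.single
        ⟨by unfold adj; omega, h x₁ le_rfl (by push_cast; omega),
         h (x₁ + 1) (by omega) (by push_cast; omega)⟩
    have : ReachOn S (x₁, y) ((x₁ + 1) + k, y) := step.trans h1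
    convert this using 2
    push_cast; ring

lemma reach_horiz (S : Set (ℤ × ℤ)) (y x₁ x₂ : ℤ) (h : x₁ ≤ x₂)
    (hall : ∀ x, x₁ ≤ x → x ≤ x₂ → (x, y) ∈ S) : ReachOn S (x₁, y) (x₂, y) := by
  obtain ⟨k, hk⟩ : ∃ k : ℕ, x₂ = x₁ + k := ⟨(x₂ - x₁).toNat, by omega⟩
  subst hk
  exact reach_horiz_aux S y k x₁ (fun x hx hx' => hall x hx hx')

lemma reach_vert_aux (S : Set (ℤ × ℤ)) (x : ℤ) : ∀ k : ℕ, ∀ y₁ : ℤ,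
    (∀ y, y₁ ≤ y → y ≤ y₁ + k → (x, y) ∈ S) →
    ReachOn S (x, y₁) (x, y₁ + k) := by
  intro k
  induction k with
  | zero => intro y₁ _; simpa [ReachOn] using Relation.ReflTransGen.refl
  | succ k ih =>
    intro y₁ h
    have h1 : ReachOn S (x, y₁ + 1) (x, (y₁ + 1) + k) :=
      ih (y₁ + 1) (fun y hy hy' => h y (by omega) (by push_cast; omega))
    have step : ReachOn S (x, y₁) (x, y₁ + 1) :=
      Relation.ReflTransGen.single
        ⟨by unfold adj; omega, h y₁ le_rfl (by push_cast; omega),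
         h (y₁ + 1) (by omega) (by push_cast; omega)⟩
    have : ReachOn S (x, y₁) (x, (y₁ + 1) + k) := step.trans h1
    convert this using 2
    push_cast; ring

lemma reach_vert (S : Set (ℤ × ℤ)) (x y₁ y₂ : ℤ) (h : y₁ ≤ y₂)
    (hall : ∀ y, y₁ ≤ y → y ≤ y₂ → (x, y) ∈ S) : ReachOn S (x, y₁) (x, y₂) := by
  obtain ⟨k, hk⟩ : ∃ k : ℕ, y₂ = y₁ + k := ⟨(y₂ - y₁).toNat, by omega⟩
  subst hk
  exact reach_vert_aux S x k y₁ (fun y hy hy' => hall y hy hy')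
theorem ring_condition_full_reachability (n m : ℕ) (P : Finset Rect)
    (hdisj : ∀ R ∈ P, ∀ R' ∈ P, R ≠ R' → ∀ p, ¬ (R.Mem p ∧ R'.Mem p))
    (hring : ∀ R ∈ P,
      (∀ p, R.EnlMem p → p ∈ Grid n m) ∧
      (∀ p, R.EnlMem p → ¬ R.Mem p → ∀ R' ∈ P, ¬ R'.Mem p)) :
    (∀ u ∈ {p | p ∈ Grid n m ∧ ∀ R ∈ P, ¬ R.Mem p},
      ∀ v ∈ {p | p ∈ Grid n m ∧ ∀ R ∈ P, ¬ R.Mem p},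
        ReachOn {p | p ∈ Grid n m ∧ ∀ R ∈ P, ¬ R.Mem p} u v) ∧
    (∀ q ∈ GridBoundary n m, ∀ R' ∈ P, ¬ R'.Mem q) ∧
    (∀ R ∈ P, ∀ q ∈ GridBoundary n m,
      ReachOn {p | p ∈ Grid n m ∧ ∀ R' ∈ P, ¬ R'.Mem p} R.access q) := by
  set S : Set (ℤ × ℤ) := {p | p ∈ Grid n m ∧ ∀ R ∈ P, ¬ R.Mem p} with hSdef
  -- ring cells are active
  have hringS : ∀ R ∈ P, ∀ p : ℤ × ℤ, R.EnlMem p → ¬ R.Mem p → p ∈ S := by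
    intro R hR p hEnl hMem
    exact ⟨(hring R hR).1 p hEnl, fun R' hR' => (hring R hR).2 p hEnl hMem R' hR'⟩
  -- boundary vertices are not covered by any rectangle
  have hbdry : ∀ q ∈ GridBoundary n m, ∀ R' ∈ P, ¬ R'.Mem q := by
    intro q hq R hR hMem
    obtain ⟨⟨hq1, hq2, hq3, hq4⟩, hside⟩ := hq
    obtain ⟨h1, h2, h3, h4⟩ := hMem
    rcases hside with h | h | h | h
    · have := (hring R hR).1 (q.1 - 1, q.2) ⟨by omega, by omega, by omega, by omega⟩
      obtain ⟨g1, g2, g3, g4⟩ := this; omega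
    · have := (hring R hR).1 (q.1 + 1, q.2) ⟨by omega, by omega, by omega, by omega⟩
      obtain ⟨g1, g2, g3, g4⟩ := this; omega
    · have := (hring R hR).1 (q.1, q.2 - 1) ⟨by omega, by omega, by omega, by omega⟩
      obtain ⟨g1, g2, g3, g4⟩ := this; omega
    · have := (hring R hR).1 (q.1, q.2 + 1) ⟨by omega, by omega, by omega, by omega⟩
      obtain ⟨g1, g2, g3, g4⟩ := this; omega
  have hbdryS : ∀ q ∈ GridBoundary n m, q ∈ S := fun q hq =>
    ⟨hq.1, hbdry q hq⟩
  -- escape upward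
  have hup : ∀ p ∈ S, p.2 + 1 < (m : ℤ) →
      ∃ p' ∈ S, ReachOn S p p' ∧ p.2 < p'.2 := by
    intro p hp hplt
    obtain ⟨⟨hg1, hg2, hg3, hg4⟩, hfree⟩ := hp
    by_cases h : (p.1, p.2 + 1) ∈ S
    · refine ⟨(p.1, p.2 + 1), h, Relation.ReflTransGen.single
        ⟨by unfold adj; omega, ⟨⟨hg1, hg2, hg3, hg4⟩, hfree⟩, h⟩, by simp⟩
    · have hgrid : (p.1, p.2 + 1) ∈ Grid n m := ⟨hg1, hg2, by omega, by omega⟩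
      have : ∃ R ∈ P, R.Mem (p.1, p.2 + 1) := by
        by_contra hcon
        push_neg at hcon
        exact h ⟨hgrid, hcon⟩
      obtain ⟨R, hR, hm1, hm2, hm3, hm4⟩ := this
      simp only at hm1 hm2 hm3 hm4
      -- p sits just below R: p.2 = R.c - 1
      have hpc : p.2 = R.c - 1 := by
        have := hfree R hR
        unfold Rect.Mem at this
        omega
      -- go right along the bottom ring to the corner
      have hcorner : ReachOn S (p.1, R.c - 1) (R.b + 1, R.c - 1) := by
        refine reach_horiz S (R.c - 1) p.1 (R.b + 1) (by omega) ?_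
        intro x hx hx'
        exact hringS R hR (x, R.c - 1) ⟨by omega, by omega, by omega, by omega⟩
          (by unfold Rect.Mem; omega)
      -- go up along the right ring
      have hupper : ReachOn S (R.b + 1, R.c - 1) (R.b + 1, R.d + 1) := by
        refine reach_vert S (R.b + 1) (R.c - 1) (R.d + 1) (by have := R.hcd; omega) ?_
        intro y hy hy'
        exact hringS R hR (R.b + 1, y) ⟨by have := R.hab; omega, by omega, by omega, by omega⟩
          (by unfold Rect.Mem; omega)
      have haccS : (R.b + 1, R.d + 1) ∈ S :=
        hringS R hR (R.b + 1, R.d + 1)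
          ⟨by have := R.hab; omega, by omega, by have := R.hcd; omega, by omega⟩
          (by unfold Rect.Mem; omega)
      refine ⟨(R.b + 1, R.d + 1), haccS, ?_, by simp; omega⟩
      have : p = (p.1, R.c - 1) := by rw [← hpc]
      rw [this]
      exact hcorner.trans hupper
  -- every active vertex reaches the top row
  have htop : ∀ p ∈ S, ∃ x : ℤ, (x, (m : ℤ) - 1) ∈ S ∧ ReachOn S p (x, (m : ℤ) - 1) := by
    intro p hp
    obtain ⟨k, hk⟩ : ∃ k : ℕ, ((m : ℤ) - 1 - p.2).toNat = k := ⟨_, rfl⟩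
    induction k using Nat.strong_induction_on generalizing p with
    | _ k ih =>
      by_cases hcase : p.2 = (m : ℤ) - 1
      · have hpe : (p.1, (m : ℤ) - 1) = p := by rw [← hcase]
        refine ⟨p.1, ?_, ?_⟩
        · rw [hpe]; exact hp
        · rw [hpe]; exact Relation.ReflTransGen.refl
      · have hlt : p.2 + 1 < (m : ℤ) := by
          have := hp.1.2.2.2; omega
        obtain ⟨p', hp'S, hreach, hlt'⟩ := hup p hp hlt
        have hk' : ((m : ℤ) - 1 - p'.2).toNat < k := by
          have := hp'S.1.2.2.2; omega
        obtain ⟨x, hxS, hxr⟩ := ih _ hk' p' hp'S rfl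
        exact ⟨x, hxS, hreach.trans hxr⟩
  -- top row connectivity
  have htopconn : ∀ x₁ x₂ : ℤ, 0 ≤ x₁ → x₁ < (n : ℤ) → 0 ≤ x₂ → x₂ < (n : ℤ) →
      0 < (m : ℤ) → ReachOn S (x₁, (m : ℤ) - 1) (x₂, (m : ℤ) - 1) := by
    intro x₁ x₂ h1 h2 h3 h4 hm
    have hall : ∀ x, min x₁ x₂ ≤ x → x ≤ max x₁ x₂ → (x, (m : ℤ) - 1) ∈ S := by
      intro x hx hx'
      exact hbdryS _ ⟨⟨by omega, by omega, by omega, by omega⟩, by simp⟩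
    rcases le_total x₁ x₂ with h | h
    · exact reach_horiz S _ x₁ x₂ h (fun x hx hx' => hall x (by omega) (by omega))
    · exact (reach_horiz S _ x₂ x₁ h (fun x hx hx' => hall x (by omega) (by omega))).symm
  -- full connectivity
  have hconn : ∀ u ∈ S, ∀ v ∈ S, ReachOn S u v := by
    intro u hu v hv
    obtain ⟨x₁, hx₁S, hx₁r⟩ := htop u hu
    obtain ⟨x₂, hx₂S, hx₂r⟩ := htop v hv
    have hm : 0 < (m : ℤ) := by have := hu.1.2.2.2; have := hu.1.2.2.1; omega
    have := htopconn x₁ x₂ hx₁S.1.1 hx₁S.1.2.1 hx₂S.1.1 hx₂S.1.2.1 hm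
    exact (hx₁r.trans this).trans hx₂r.symm
  refine ⟨hconn, hbdry, ?_⟩
  intro R hR q hq
  have haccS : R.access ∈ S :=
    hringS R hR (R.b + 1, R.d + 1)
      ⟨by have := R.hab; omega, by omega, by have := R.hcd; omega, by omega⟩
      (by unfold Rect.Mem; omega)
  exact hconn R.access haccS q (hbdryS q hq)
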